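/- Let G : ℝ → ℝ be a smooth solution of 4G'''(z) + zG(z) = 0 such that G(z) > 0 and G is monotonically increasing for all sufficiently large negative z (i.e., G' > 0 near −∞), with G, G', G'' → 0 as z → −∞. Then G'(z) > 0 for all z ≤ 0, i.e., G remains monotonically increasing on (−∞, 0]. -/

import Mathlib

open Filter Topology

/-- If `G` solves `4G''' + zG = 0`, is positive and strictly increasing near `-∞`, and
`G, G', G'' → 0` as `z → -∞`, then `G' > 0` on `(-∞, 0]`. -/
theorem monotone_on_negative_axis
    (G : ℝ → ℝ) (hG : ContDiff ℝ 3 G)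
    (hode : ∀ z : ℝ, 4 * iteratedDeriv 3 G z + z * G z = 0)
    (hpos : ∃ M : ℝ, ∀ z ≤ M, 0 < G z ∧ 0 < deriv G z)
    (hdecay : ∀ k ≤ 2, Tendsto (fun z => iteratedDeriv k G z) atBot (𝓝 0)) :
    ∀ z ≤ (0:ℝ), 0 < deriv G z := by
  obtain ⟨M, hM⟩ := hpos
  set f1 := deriv G with hf1
  set f2 := deriv f1 with hf2
  have hd0 : Differentiable ℝ G := hG.differentiable (by norm_num)
  have hc1 : ContDiff ℝ 2 f1 := by
    have := ContDiff.iterate_deriv' 2 1 (f := G) (by exact_mod_cast hG)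
    simpa using this
  have hd1 : Differentiable ℝ f1 := hc1.differentiable (by norm_num)
  have hc2 : ContDiff ℝ 1 f2 := by
    have := ContDiff.iterate_deriv' 1 2 (f := G) (by exact_mod_cast hG)
    simpa [Function.iterate_succ, hf1, hf2] using this
  have hd2 : Differentiable ℝ f2 := hc2.differentiable (by norm_num)
  have h2eq : iteratedDeriv 2 G = f2 := by
    ext x
    simp [iteratedDeriv_succ, iteratedDeriv_one, hf1, hf2]
  have h3eq : ∀ z, deriv f2 z = -(z * G z) / 4 := by
    intro z
    have h := hode z
    have h3 : iteratedDeriv 3 G z = deriv f2 z := by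
      rw [show (3:ℕ) = 2 + 1 from rfl, iteratedDeriv_succ, h2eq]
    rw [h3] at h
    linarith
  have htend1 : Tendsto f1 atBot (𝓝 0) := by
    simpa [iteratedDeriv_one] using hdecay 1 (by norm_num)
  have htend2 : Tendsto f2 atBot (𝓝 0) := by
    simpa [h2eq] using hdecay 2 le_rfl
  -- the bootstrap: if G > 0 strictly below t ≤ 0, then G' > 0 on (-∞, t]
  have key : ∀ t ≤ (0:ℝ), (∀ y < t, 0 < G y) → ∀ y ≤ t, 0 < f1 y := by
    intro t ht hGpos
    have hm2 : StrictMonoOn f2 (Set.Iic t) := by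
      apply strictMonoOn_of_deriv_pos (convex_Iic t) hd2.continuous.continuousOn
      intro x hx
      rw [interior_Iic] at hx
      rw [h3eq]
      have hx0 : x < 0 := lt_of_lt_of_le hx ht
      have hGx := hGpos x hx
      nlinarith
    have h2nonneg : ∀ y ≤ t, 0 ≤ f2 y := by
      intro y hy
      refine le_of_tendsto htend2 ?_
      filter_upwards [eventually_le_atBot y] with w hw
      exact hm2.monotoneOn (le_trans hw hy) hy hw
    have h2pos : ∀ y < t, 0 < f2 y := by
      intro y hy
      have h1 : f2 (y - 1) < f2 y := hm2 (by simp; linarith) (le_of_lt hy) (by linarith)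
      have h2 : (0:ℝ) ≤ f2 (y - 1) := h2nonneg _ (by linarith)
      linarith
    have hm1 : StrictMonoOn f1 (Set.Iic t) := by
      apply strictMonoOn_of_deriv_pos (convex_Iic t) hd1.continuous.continuousOn
      intro x hx
      rw [interior_Iic] at hx
      exact h2pos x hx
    have h1nonneg : ∀ y ≤ t, 0 ≤ f1 y := by
      intro y hy
      refine le_of_tendsto htend1 ?_
      filter_upwards [eventually_le_atBot y] with w hw
      exact hm1.monotoneOn (le_trans hw hy) hy hw
    intro y hy
    have h1 : f1 (y - 1) < f1 y := hm1 (by simp; linarith) hy (by linarith)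
    have h2 : (0:ℝ) ≤ f1 (y - 1) := h1nonneg _ (by linarith)
    linarith
  -- G stays positive on (-∞, 0]
  have Gpos : ∀ t ≤ (0:ℝ), 0 < G t := by
    by_contra hc
    push_neg at hc
    obtain ⟨t, ht0, hGt⟩ := hc
    set S : Set ℝ := {z | z ≤ 0 ∧ G z ≤ 0} with hS
    have hSne : S.Nonempty := ⟨t, ht0, hGt⟩
    have hSclosed : IsClosed S := by
      have : S = Set.Iic 0 ∩ G ⁻¹' Set.Iic 0 := rfl
      rw [this]
      exact isClosed_Iic.inter (isClosed_Iic.preimage hd0.continuous)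
    have hSbdd : BddBelow S := by
      refine ⟨M, fun z hz => ?_⟩
      by_contra h
      push_neg at h
      exact absurd hz.2 (not_le.2 (hM z h.le).1)
    set t₀ := sInf S with ht₀
    have ht₀S : t₀ ∈ S := hSclosed.csInf_mem hSne hSbdd
    have hprev : ∀ y < t₀, 0 < G y := by
      intro y hy
      by_cases hyM : y ≤ M
      · exact (hM y hyM).1
      · by_contra h
        push_neg at h
        have hyS : y ∈ S := ⟨le_trans hy.le ht₀S.1, h⟩
        exact absurd (csInf_le hSbdd hyS) (not_le.2 hy)
    have hf1pos := key t₀ ht₀S.1 hprev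
    have hmG : StrictMonoOn G (Set.Iic t₀) := by
      apply strictMonoOn_of_deriv_pos (convex_Iic t₀) hd0.continuous.continuousOn
      intro x hx
      rw [interior_Iic] at hx
      exact hf1pos x hx.le
    have h1 : G (t₀ - 1) < G t₀ := hmG (by simp) Set.self_mem_Iic (by linarith)
    have h2 := hprev (t₀ - 1) (by linarith)
    linarith [ht₀S.2]
  intro z hz
  exact key 0 le_rfl (fun y hy => Gpos y hy.le) z hz
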